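/- arXiv:1502.05306 — 2 statements merged into one kernel-verified Lean document; each statement's English description precedes it below -/
import Mathlib

section
/- If a rational map φ of degree d ≥ 2 commutes with the imaginary reflection τ(z) = -1/conj(z), then d is odd. -/
open OnePoint Complex Polynomial

/-- The Möbius transformation determined by the matrix `[[a,b],[c,d]]`,
acting on the Riemann sphere `OnePoint ℂ`. -/
noncomputable def moeb (a b c d : ℂ) (p : OnePoint ℂ) : OnePoint ℂ :=
  OnePoint.elim p (if c = 0 then ∞ else ((a / c : ℂ) : OnePoint ℂ))
    (fun z => if c * z + d = 0 then ∞ else (((a * z + b) / (c * z + d) : ℂ) : OnePoint ℂ))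

/-- Complex conjugation extended to the Riemann sphere. -/
noncomputable def sphConj (p : OnePoint ℂ) : OnePoint ℂ :=
  OnePoint.elim p ∞ (fun z => ((starRingEnd ℂ) z : OnePoint ℂ))

/-- The imaginary reflection `τ(z) = -1/conj z` on the Riemann sphere. -/
noncomputable def tauSph (p : OnePoint ℂ) : OnePoint ℂ :=
  moeb 0 (-1) 1 0 (sphConj p)

/-- The rational map on the Riemann sphere determined by a quotient `P/Q`
of (coprime) polynomials. -/
noncomputable def ratMap (P Q : Polynomial ℂ) (p : OnePoint ℂ) : OnePoint ℂ :=
  OnePoint.elim p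
    (if Q.degree < P.degree then ∞
     else ((P.coeff Q.natDegree / Q.leadingCoeff : ℂ) : OnePoint ℂ))
    (fun z => if Q.eval z = 0 then ∞ else ((P.eval z / Q.eval z : ℂ) : OnePoint ℂ))

/-- For `R` of degree at most `d`, the polynomial `X^d · R(-1/X)`. -/
noncomputable def dag (d : ℕ) (R : Polynomial ℂ) : Polynomial ℂ :=
  ∑ k ∈ Finset.range (d+1), C (R.coeff k * (-1)^k) * X^(d-k)

lemma dag_eval {d : ℕ} {R : Polynomial ℂ} (hR : R.natDegree ≤ d) {u : ℂ} (hu : u ≠ 0) :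
    (dag d R).eval u = u^d * R.eval (-1/u) := by
  rw [dag, eval_finset_sum, eval_eq_sum_range' (lt_of_le_of_lt hR (Nat.lt_succ_self d)),
    Finset.mul_sum]
  refine Finset.sum_congr rfl fun k hk => ?_
  simp only [Finset.mem_range, Nat.lt_succ_iff] at hk
  rw [eval_mul, eval_C, eval_pow, eval_X]
  have h : u^d = u^(d-k) * u^k := by rw [← pow_add, Nat.sub_add_cancel hk]
  rw [h]
  field_simp
  rw [mul_assoc, ← mul_pow, mul_neg, mul_one_div_cancel hu]

lemma natDegree_dag_le (d : ℕ) (R : Polynomial ℂ) : (dag d R).natDegree ≤ d := by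
  refine Polynomial.natDegree_sum_le_of_forall_le _ _ fun k hk => ?_
  refine le_trans (natDegree_C_mul_le _ _) ?_
  simp [Nat.sub_le]

lemma dag_ne_zero {d : ℕ} {R : Polynomial ℂ} (hR : R.natDegree ≤ d) (h0 : R ≠ 0) :
    dag d R ≠ 0 := by
  intro h
  apply h0
  refine Polynomial.eq_of_infinite_eval_eq R 0 ?_
  have hsub : {x : ℂ | x ≠ 0} ⊆ {x | eval x R = eval x 0} := by
    intro x hx
    have hu : (-1/x : ℂ) ≠ 0 := div_ne_zero (by norm_num) hx
    have := dag_eval hR hu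
    rw [h, eval_zero] at this
    have hxx : (-1 / (-1/x) : ℂ) = x := by field_simp
    rw [hxx] at this
    have hpow : (-1/x : ℂ)^d ≠ 0 := pow_ne_zero _ hu
    simp only [Set.mem_setOf_eq, eval_zero]
    exact (mul_eq_zero.mp this.symm).resolve_left hpow
  exact Set.Infinite.mono hsub (Set.finite_singleton (0:ℂ)).infinite_compl

lemma dag_dag {d : ℕ} {R : Polynomial ℂ} (hR : R.natDegree ≤ d) :
    dag d (dag d R) = C ((-1:ℂ)^d) * R := by
  refine Polynomial.eq_of_infinite_eval_eq _ _ ?_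
  have hsub : {x : ℂ | x ≠ 0} ⊆ {x | eval x (dag d (dag d R)) = eval x (C ((-1:ℂ)^d) * R)} := by
    intro u hu
    have hu' : (u : ℂ) ≠ 0 := hu
    have hiu : (-1/u : ℂ) ≠ 0 := div_ne_zero (by norm_num) hu'
    have h1 := dag_eval (natDegree_dag_le d R) hu'
    have h2 := dag_eval hR hiu
    have hxx : (-1 / (-1/u) : ℂ) = u := by field_simp
    rw [hxx] at h2
    simp only [Set.mem_setOf_eq, h1, h2, eval_mul, eval_C]
    field_simp
    rw [← mul_pow, mul_neg, mul_one_div_cancel hu', mul_comm]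
  exact Set.Infinite.mono hsub (Set.finite_singleton (0:ℂ)).infinite_compl

lemma dag_C_mul (d : ℕ) (a : ℂ) (R : Polynomial ℂ) : dag d (C a * R) = C a * dag d R := by
  rw [dag, dag, Finset.mul_sum]
  refine Finset.sum_congr rfl fun k _ => ?_
  rw [coeff_C_mul, ← mul_assoc, ← C_mul, mul_assoc]

lemma map_conj_dag (d : ℕ) (R : Polynomial ℂ) :
    (dag d R).map (starRingEnd ℂ) = dag d (R.map (starRingEnd ℂ)) := by
  rw [dag, dag, Polynomial.map_sum]
  refine Finset.sum_congr rfl fun k _ => ?_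
  rw [Polynomial.map_mul, Polynomial.map_C, Polynomial.map_pow, Polynomial.map_X, coeff_map]
  congr 1
  rw [map_mul, map_pow, map_neg, map_one]

lemma ratMap_coe (P Q : Polynomial ℂ) (z : ℂ) (hz : Q.eval z ≠ 0) :
    ratMap P Q ↑z = ((P.eval z / Q.eval z : ℂ) : OnePoint ℂ) := by
  simp [ratMap, hz]

lemma tauSph_coe {z : ℂ} (hz : z ≠ 0) :
    tauSph ↑z = ((-1 / (starRingEnd ℂ) z : ℂ) : OnePoint ℂ) := by
  have h1 : (starRingEnd ℂ) z ≠ 0 := by simpa using hz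
  simp [tauSph, sphConj, moeb, h1]

/-- a rational map of degree `d ≥ 2` commuting with the imaginary
reflection `τ(z) = -1/conj z` has odd degree. -/
theorem odd_degree_of_commutes_with_tau
    (d : ℕ) (hd : 2 ≤ d) (P Q : Polynomial ℂ)
    (hcop : IsCoprime P Q) (hdeg : max P.natDegree Q.natDegree = d)
    (hcomm : ∀ p, tauSph (ratMap P Q p) = ratMap P Q (tauSph p)) :
    Odd d := by
  set σ := starRingEnd ℂ with hσ
  have hP : P ≠ 0 := by
    rintro rfl
    rw [isCoprime_zero_left] at hcop
    have h0 := Polynomial.natDegree_eq_zero_of_isUnit hcop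
    simp [h0] at hdeg
    omega
  have hQ : Q ≠ 0 := by
    rintro rfl
    rw [isCoprime_zero_right] at hcop
    have h0 := Polynomial.natDegree_eq_zero_of_isUnit hcop
    simp [h0] at hdeg
    omega
  have hPd : P.natDegree ≤ d := hdeg ▸ le_max_left _ _
  have hQd : Q.natDegree ≤ d := hdeg ▸ le_max_right _ _
  set Pb := P.map σ with hPbdef
  set Qb := Q.map σ with hQbdef
  set A := dag d P with hAdef
  set B := dag d Q with hBdef
  -- the key polynomial identity
  have key : Pb * A + Qb * B = 0 := by
    refine Polynomial.eq_of_infinite_eval_eq _ 0 ?_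
    set S := {u : ℂ | u ≠ 0 ∧ P.eval (σ u) ≠ 0 ∧ Q.eval (σ u) ≠ 0 ∧ Q.eval (-1/u) ≠ 0} with hS
    have hsub : S ⊆ {x | eval x (Pb * A + Qb * B) = eval x 0} := by
      rintro u ⟨hu, hPu, hQu, hQw⟩
      set z := σ u with hz
      have hσz : σ z = u := by rw [hz]; exact Complex.conj_conj u
      have hz0 : z ≠ 0 := by simp [hz]; simpa using hu
      have h := hcomm (z : OnePoint ℂ)
      rw [ratMap_coe P Q z hQu, tauSph_coe hz0, hσz, ratMap_coe P Q _ hQw] at h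
      have hfz : P.eval z / Q.eval z ≠ 0 := div_ne_zero hPu hQu
      rw [tauSph_coe hfz, OnePoint.coe_eq_coe] at h
      have hPbu : Pb.eval u = σ (P.eval z) := by
        rw [hPbdef, ← hσz, eval_map, eval₂_hom]
      have hQbu : Qb.eval u = σ (Q.eval z) := by
        rw [hQbdef, ← hσz, eval_map, eval₂_hom]
      simp only [Set.mem_setOf_eq, eval_zero, eval_add, eval_mul]
      rw [hPbu, hQbu, hAdef, hBdef, dag_eval hPd hu, dag_eval hQd hu]
      rw [map_div₀] at h
      have h1 : σ (P.eval z) ≠ 0 := by simpa using hPu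
      have h2 : σ (Q.eval z) ≠ 0 := by simpa using hQu
      rw [← hσ, eq_div_iff hQw] at h
      linear_combination (norm := skip) -(σ (P.eval z) * u^d) * h
      field_simp
      ring
    refine Set.Infinite.mono hsub ?_
    have hSfin : Sᶜ.Finite := by
      have f1 : ({0} : Set ℂ).Finite := Set.finite_singleton 0
      have hinjσ : Function.Injective (σ : ℂ → ℂ) := (starRingEnd ℂ).injective
      have f2 : {u : ℂ | P.eval (σ u) = 0}.Finite := by
        have := (Polynomial.finite_setOf_isRoot hP).preimage hinjσ.injOn
        simpa [Set.preimage, Polynomial.IsRoot] using this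
      have f3 : {u : ℂ | Q.eval (σ u) = 0}.Finite := by
        have := (Polynomial.finite_setOf_isRoot hQ).preimage hinjσ.injOn
        simpa [Set.preimage, Polynomial.IsRoot] using this
      have f4 : {u : ℂ | Q.eval (-1/u) = 0}.Finite := by
        have hinj : Function.Injective (fun u : ℂ => -1/u) := by
          have he : (fun u : ℂ => -1/u) = (fun x : ℂ => -x) ∘ (fun u : ℂ => u⁻¹) := by
            funext u; simp [neg_div, one_div]
          rw [he]; exact neg_injective.comp inv_injective
        have := (Polynomial.finite_setOf_isRoot hQ).preimage hinj.injOn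
        simpa [Set.preimage, Polynomial.IsRoot] using this
      refine Set.Finite.subset (((f1.union f2).union f3).union f4) ?_
      intro u hu
      simp only [hS, Set.mem_compl_iff, Set.mem_setOf_eq, not_and_or, not_not, ne_eq] at hu
      rcases hu with h | h | h | h
      · exact Or.inl (Or.inl (Or.inl (by simpa using h)))
      · exact Or.inl (Or.inl (Or.inr (by simpa using h)))
      · exact Or.inl (Or.inr (by simpa using h))
      · exact Or.inr (by simpa using h)
    simpa using hSfin.infinite_compl
  have E : Pb * A = -(Qb * B) := eq_neg_of_add_eq_zero_left key
  have hPb : Pb ≠ 0 := Polynomial.map_ne_zero hP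
  have hQb : Qb ≠ 0 := Polynomial.map_ne_zero hQ
  have hA : A ≠ 0 := dag_ne_zero hPd hP
  have hB : B ≠ 0 := dag_ne_zero hQd hQ
  have hcopb : IsCoprime Pb Qb := by
    have := IsCoprime.map hcop (Polynomial.mapRingHom σ)
    simpa [Polynomial.coe_mapRingHom] using this
  have hPbd : Pb.natDegree = P.natDegree := Polynomial.natDegree_map σ
  have hQbd : Qb.natDegree = Q.natDegree := Polynomial.natDegree_map σ
  obtain ⟨c, hc, hA', hB'⟩ : ∃ c : ℂ, c ≠ 0 ∧ A = C c * Qb ∧ B = -(C c * Pb) := by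
    rcases max_eq_iff.mp hdeg with ⟨h1, -⟩ | ⟨h1, -⟩
    · -- P.natDegree = d
      have hdvd : Pb ∣ B := hcopb.dvd_of_dvd_mul_left ⟨-A, by linear_combination E⟩
      obtain ⟨g, hg⟩ := hdvd
      have hgne : g ≠ 0 := by rintro rfl; rw [mul_zero] at hg; exact hB hg
      have hle : Pb.natDegree + g.natDegree ≤ d := by
        rw [← Polynomial.natDegree_mul hPb hgne, ← hg]; exact natDegree_dag_le d Q
      have hg0 : g.natDegree = 0 := by omega
      have hgc : g = C (g.coeff 0) := Polynomial.eq_C_of_natDegree_eq_zero hg0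
      set c := g.coeff 0 with hcdef
      have hcne : c ≠ 0 := fun hh => hgne (by rw [hgc, hh, map_zero])
      have hB2 : B = Pb * C c := by rw [hg, ← hgc]
      have hfac : Pb * (A + C c * Qb) = 0 := by linear_combination E - Qb * hB2
      have hA2 : A = -(C c * Qb) :=
        eq_neg_of_add_eq_zero_left ((mul_eq_zero.mp hfac).resolve_left hPb)
      refine ⟨-c, neg_ne_zero.mpr hcne, ?_, ?_⟩
      · rw [hA2, map_neg]; ring
      · rw [hB2, map_neg]; ring
    · -- Q.natDegree = d
      have hdvd : Qb ∣ A := hcopb.symm.dvd_of_dvd_mul_left ⟨-B, by linear_combination E⟩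
      obtain ⟨g, hg⟩ := hdvd
      have hgne : g ≠ 0 := by rintro rfl; rw [mul_zero] at hg; exact hA hg
      have hle : Qb.natDegree + g.natDegree ≤ d := by
        rw [← Polynomial.natDegree_mul hQb hgne, ← hg]; exact natDegree_dag_le d P
      have hg0 : g.natDegree = 0 := by omega
      have hgc : g = C (g.coeff 0) := Polynomial.eq_C_of_natDegree_eq_zero hg0
      set c := g.coeff 0 with hcdef
      have hcne : c ≠ 0 := fun hh => hgne (by rw [hgc, hh, map_zero])
      have hA2 : A = C c * Qb := by rw [hg, ← hgc]; ring
      have hfac : Qb * (B + C c * Pb) = 0 := by linear_combination E - Pb * hA2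
      have hB2 : B = -(C c * Pb) :=
        eq_neg_of_add_eq_zero_left ((mul_eq_zero.mp hfac).resolve_left hQb)
      exact ⟨c, hcne, hA2, hB2⟩
  -- conjugate the first identity
  have hσσ : (starRingEnd ℂ).comp (starRingEnd ℂ) = RingHom.id ℂ := by
    ext z; simp
  have h1 : dag d Pb = C (σ c) * Q := by
    have hmap := congrArg (Polynomial.map σ) hA'
    rw [hAdef, map_conj_dag, Polynomial.map_mul, Polynomial.map_C, hQbdef,
      Polynomial.map_map] at hmap
    rw [hσ] at hmap
    rw [hσσ, Polynomial.map_id] at hmap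
    exact hmap
  have hPbdle : Pb.natDegree ≤ d := by rw [hPbd]; exact hPd
  have h2 : C ((-1:ℂ)^d) * Pb = C (σ c) * B := by
    have := congrArg (dag d) h1
    rw [dag_dag hPbdle, dag_C_mul, ← hBdef] at this
    exact this
  rw [hB'] at h2
  have hkey : ((-1:ℂ)^d + σ c * c) = 0 := by
    have hmul : (C ((-1:ℂ)^d + σ c * c)) * Pb = 0 := by
      rw [map_add, map_mul]; linear_combination h2
    exact Polynomial.C_eq_zero.mp ((mul_eq_zero.mp hmul).resolve_right hPb)
  rcases Nat.even_or_odd d with he | ho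
  · exfalso
    rw [he.neg_one_pow] at hkey
    have hnc : σ c * c = (Complex.normSq c : ℂ) := by
      rw [mul_comm, hσ, Complex.mul_conj]
    rw [hnc] at hkey
    have hre := congrArg Complex.re hkey
    simp at hre
    have := Complex.normSq_nonneg c
    -- hre : 1 + normSq c = 0
    nlinarith [Complex.normSq_nonneg c]
  · exact ho
end

section
/- Let n ≥ 2 and let ψ be a rational map with φ(z) = z·ψ(z^n). Then φ commutes with the reflection R(z) = β·conj(z), |β| = 1, if and only if ψ(z) = conj(ψ)(z/β^n) for all z. -/
open OnePoint Complex Polynomial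

lemma elim_coe' {Y : Type*} (y : Y) (f : ℂ → Y) (x : ℂ) :
    OnePoint.elim (x : OnePoint ℂ) y f = f x := rfl

lemma R_coe (β : ℂ) (z : ℂ) : moeb β 0 0 1 (sphConj (z : OnePoint ℂ))
    = ((β * (starRingEnd ℂ) z : ℂ) : OnePoint ℂ) := by
  simp [moeb, sphConj, elim_coe']

lemma elim_infty' {Y : Type*} (y : Y) (f : ℂ → Y) :
    OnePoint.elim (∞ : OnePoint ℂ) y f = y := rfl

lemma R_infty (β : ℂ) : moeb β 0 0 1 (sphConj (∞ : OnePoint ℂ)) = ∞ := by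
  simp [moeb, sphConj, elim_infty']

lemma ratMap_coe_ne (P Q : Polynomial ℂ) (z : ℂ) (h : Q.eval z ≠ 0) :
    ratMap P Q (z : OnePoint ℂ) = ((P.eval z / Q.eval z : ℂ) : OnePoint ℂ) := by
  simp [ratMap, elim_coe', h]

lemma ratMap_coe_eq (P Q : Polynomial ℂ) (z : ℂ) (h : Q.eval z = 0) :
    ratMap P Q (z : OnePoint ℂ) = ∞ := by
  simp [ratMap, elim_coe', h]

lemma ratMap_infty (P Q : Polynomial ℂ) :
    ratMap P Q (∞ : OnePoint ℂ) = (if Q.degree < P.degree then ∞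
     else ((P.coeff Q.natDegree / Q.leadingCoeff : ℂ) : OnePoint ℂ)) := rfl

lemma conj_eval (p : Polynomial ℂ) (w : ℂ) :
    (starRingEnd ℂ) (p.eval w) = (p.map (starRingEnd ℂ)).eval ((starRingEnd ℂ) w) := by
  rw [Polynomial.eval_map, show p.eval w = p.eval₂ (RingHom.id ℂ) w from rfl,
    Polynomial.hom_eval₂]
  simp

lemma conj_eval_map (p : Polynomial ℂ) (u : ℂ) :
    (starRingEnd ℂ) ((p.map (starRingEnd ℂ)).eval u) = p.eval ((starRingEnd ℂ) u) := by
  rw [conj_eval, Polynomial.map_map,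
    show (starRingEnd ℂ).comp (starRingEnd ℂ) = RingHom.id ℂ from
      RingHom.ext fun x => Complex.conj_conj x, Polynomial.map_id]

lemma coprime_eval {A B : Polynomial ℂ} (h : IsCoprime A B) {z : ℂ}
    (hA : A.eval z = 0) : B.eval z ≠ 0 := by
  obtain ⟨u, v, huv⟩ := h
  intro hBz
  have := congrArg (Polynomial.eval z) huv
  simp [hA, hBz] at this

/-- `φ(z) = z ψ(z^n)` commutes with the reflection
`R(z) = β conj z`, `|β| = 1`, iff `ψ(z) = conj(ψ)(z/β^n)`. -/
theorem commutes_with_reflection_iff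
    (n : ℕ) (hn : 2 ≤ n) (β : ℂ) (hβ : ‖β‖ = 1)
    (A B : Polynomial ℂ) (hAB : IsCoprime A B) (hB : B ≠ 0) :
    (∀ p, moeb β 0 0 1 (sphConj (ratMap (X * A.comp (X ^ n)) (B.comp (X ^ n)) p))
        = ratMap (X * A.comp (X ^ n)) (B.comp (X ^ n)) (moeb β 0 0 1 (sphConj p))) ↔
      (∀ z : ℂ, B.eval z ≠ 0 → (B.map (starRingEnd ℂ)).eval (z / β ^ n) ≠ 0 →
        A.eval z / B.eval z
          = (A.map (starRingEnd ℂ)).eval (z / β ^ n) /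
            (B.map (starRingEnd ℂ)).eval (z / β ^ n)) := by
  have hβ0 : β ≠ 0 := by
    intro h; rw [h] at hβ; simp at hβ
  set b : ℂ := β ^ n with hbdef
  have hb0 : b ≠ 0 := pow_ne_zero _ hβ0
  have hconjβ : (starRingEnd ℂ) β = β⁻¹ := by
    have h1 : β * (starRingEnd ℂ) β = 1 := by
      rw [Complex.mul_conj, Complex.normSq_eq_norm_sq, hβ]; norm_num
    exact eq_inv_of_mul_eq_one_right h1
  have hconjb : (starRingEnd ℂ) b = b⁻¹ := by
    rw [hbdef, map_pow, hconjβ, inv_pow]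
  set Ac := A.map (starRingEnd ℂ) with hAcdef
  set Bc := B.map (starRingEnd ℂ) with hBcdef
  set P : Polynomial ℂ := X * A.comp (X ^ n) with hPdef
  set Q : Polynomial ℂ := B.comp (X ^ n) with hQdef
  have hBc0 : Bc ≠ 0 := by
    rw [hBcdef, Ne, Polynomial.map_eq_zero_iff (starRingEnd ℂ).injective]
    exact hB
  have hcop2 : IsCoprime Ac Bc := hAB.map (Polynomial.mapRingHom (starRingEnd ℂ))
  have hPe : ∀ z : ℂ, P.eval z = z * A.eval (z ^ n) := by
    intro z; simp [hPdef, Polynomial.eval_comp]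
  have hQe : ∀ z : ℂ, Q.eval z = B.eval (z ^ n) := by
    intro z; simp [hQdef, Polynomial.eval_comp]
  have hQR : ∀ z : ℂ, Q.eval (β * (starRingEnd ℂ) z)
      = (starRingEnd ℂ) (Bc.eval (z ^ n / b)) := by
    intro z
    rw [hQe, hBcdef, conj_eval_map]
    congr 1
    rw [map_div₀, hconjb, div_eq_mul_inv, inv_inv, map_pow, mul_pow]
    ring
  have hPR : ∀ z : ℂ, P.eval (β * (starRingEnd ℂ) z)
      = β * (starRingEnd ℂ) z * (starRingEnd ℂ) (Ac.eval (z ^ n / b)) := by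
    intro z
    rw [hPe, hAcdef, conj_eval_map]
    congr 2
    rw [map_div₀, hconjb, div_eq_mul_inv, inv_inv, map_pow, mul_pow]
    ring
  -- upgrading a cross identity on a cofinite set to a global one
  have hcomp : ∀ (p : Polynomial ℂ) (w : ℂ),
      (p.comp (Polynomial.C b⁻¹ * X)).eval w = p.eval (w / b) := by
    intro p w
    rw [Polynomial.eval_comp]
    congr 1
    rw [Polynomial.eval_mul, Polynomial.eval_C, Polynomial.eval_X, div_eq_mul_inv, mul_comm]
  have rhs_of_partial :
      (∀ w : ℂ, w ≠ 0 → B.eval w ≠ 0 → Bc.eval (w / b) ≠ 0 →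
          A.eval w * Bc.eval (w / b) = Ac.eval (w / b) * B.eval w) →
      ∀ w : ℂ, A.eval w * Bc.eval (w / b) = Ac.eval (w / b) * B.eval w := by
    intro hpart
    have hfin : ({0} ∪ ({w : ℂ | B.eval w = 0} ∪ {w : ℂ | Bc.eval (w / b) = 0})).Finite := by
      refine (Set.finite_singleton 0).union (Set.Finite.union ?_ ?_)
      · exact Polynomial.finite_setOf_isRoot hB
      · have hinj : Function.Injective (fun w : ℂ => w / b) := by
          intro x y hxy
          field_simp at hxy
          exact hxy
        exact (Polynomial.finite_setOf_isRoot hBc0).preimage hinj.injOn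
    have hpoly : A * Bc.comp (Polynomial.C b⁻¹ * X)
        = Ac.comp (Polynomial.C b⁻¹ * X) * B := by
      apply Polynomial.eq_of_infinite_eval_eq
      apply Set.Infinite.mono (s := (({0} : Set ℂ) ∪ ({w : ℂ | B.eval w = 0} ∪ {w : ℂ | Bc.eval (w / b) = 0}))ᶜ)
      · intro w hw
        simp only [Set.mem_compl_iff, Set.mem_union, Set.mem_singleton_iff,
          Set.mem_setOf_eq, not_or] at hw
        obtain ⟨hw0, hw1, hw2⟩ := hw
        simp only [Set.mem_setOf_eq, Polynomial.eval_mul, hcomp]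
        exact hpart w hw0 hw1 hw2
      · exact hfin.infinite_compl
    intro w
    have := congrArg (Polynomial.eval w) hpoly
    simpa only [Polynomial.eval_mul, hcomp] using this
  constructor
  · -- forward
    intro hcomm
    have hpart : ∀ w : ℂ, w ≠ 0 → B.eval w ≠ 0 → Bc.eval (w / b) ≠ 0 →
        A.eval w * Bc.eval (w / b) = Ac.eval (w / b) * B.eval w := by
      intro w hw hBw hBcw
      obtain ⟨z, rfl⟩ := IsAlgClosed.exists_pow_nat_eq w (show 0 < n by omega)
      have hz : z ≠ 0 := by
        intro h
        rw [h, zero_pow (by omega)] at hw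
        exact hw rfl
      have hcz : (starRingEnd ℂ) z ≠ 0 := by
        rwa [Ne, _root_.map_eq_zero]
      have hQz : Q.eval z ≠ 0 := by rw [hQe]; exact hBw
      have hQRz : Q.eval (β * (starRingEnd ℂ) z) ≠ 0 := by
        rw [hQR]; rwa [Ne, _root_.map_eq_zero]
      have key := hcomm (z : OnePoint ℂ)
      rw [ratMap_coe_ne _ _ _ hQz, R_coe, R_coe, ratMap_coe_ne _ _ _ hQRz,
        OnePoint.coe_eq_coe] at key
      rw [hPe, hQe, hPR, hQR] at key
      have hc1 : (starRingEnd ℂ) (B.eval (z ^ n)) ≠ 0 := by rwa [Ne, _root_.map_eq_zero]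
      have hc2 : (starRingEnd ℂ) (Bc.eval (z ^ n / b)) ≠ 0 := by rwa [Ne, _root_.map_eq_zero]
      have key2 : β * (starRingEnd ℂ) z *
            ((starRingEnd ℂ) (A.eval (z ^ n)) * (starRingEnd ℂ) (Bc.eval (z ^ n / b)))
          = β * (starRingEnd ℂ) z *
            ((starRingEnd ℂ) (Ac.eval (z ^ n / b)) * (starRingEnd ℂ) (B.eval (z ^ n))) := by
        rw [map_div₀, map_mul] at key
        field_simp at key
        linear_combination (β * (starRingEnd ℂ) z) * key
      have key3 := mul_left_cancel₀ (mul_ne_zero hβ0 hcz) key2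
      have key4 : (starRingEnd ℂ) (A.eval (z ^ n) * Bc.eval (z ^ n / b))
          = (starRingEnd ℂ) (Ac.eval (z ^ n / b) * B.eval (z ^ n)) := by
        rw [map_mul, map_mul]; exact key3
      exact (starRingEnd ℂ).injective key4
    have cross := rhs_of_partial hpart
    intro w hw1 hw2
    rw [div_eq_div_iff hw1 hw2]
    exact cross w
  · -- backward
    intro h
    have cross := rhs_of_partial (fun w _ h1 h2 => (div_eq_div_iff h1 h2).mp (h w h1 h2))
    have null : ∀ w : ℂ, B.eval w = 0 → Bc.eval (w / b) = 0 := by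
      intro w hw
      have hA0 : A.eval w ≠ 0 := coprime_eval hAB.symm hw
      have hc := cross w
      rw [hw, mul_zero] at hc
      exact (mul_eq_zero.mp hc).resolve_left hA0
    have nonnull : ∀ w : ℂ, B.eval w ≠ 0 → Bc.eval (w / b) ≠ 0 := by
      intro w hw h0
      have hc := cross w
      rw [h0, mul_zero] at hc
      have hAc0 : Ac.eval (w / b) = 0 := by
        rcases mul_eq_zero.mp hc.symm with h | h
        · exact h
        · exact absurd h hw
      exact (coprime_eval hcop2 hAc0) h0
    intro p
    induction p using OnePoint.rec with
    | infty =>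
      rw [R_infty, ratMap_infty]
      by_cases hdeg : Q.degree < P.degree
      · rw [if_pos hdeg, R_infty]
      · rw [if_neg hdeg]
        have hcoeff : P.coeff Q.natDegree = 0 := by
          by_cases hA : A = 0
          · simp [hPdef, hA]
          · have hAcomp : A.comp (X ^ n : Polynomial ℂ) ≠ 0 := by
              rw [Ne, Polynomial.comp_eq_zero_iff]
              rintro (h | ⟨-, h⟩)
              · exact hA h
              · have := congrArg Polynomial.natDegree h
                rw [Polynomial.natDegree_X_pow, Polynomial.natDegree_C] at this
                omega
            have hPne : P ≠ 0 := mul_ne_zero Polynomial.X_ne_zero hAcomp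
            have hQne : Q ≠ 0 := by
              rw [hQdef, Ne, Polynomial.comp_eq_zero_iff]
              rintro (h | ⟨-, h⟩)
              · exact hB h
              · have := congrArg Polynomial.natDegree h
                rw [Polynomial.natDegree_X_pow, Polynomial.natDegree_C] at this
                omega
            have hdeg' : P.natDegree ≤ Q.natDegree :=
              Polynomial.natDegree_le_natDegree (not_lt.mp hdeg)
            have hPd : P.natDegree = n * A.natDegree + 1 := by
              rw [hPdef, Polynomial.natDegree_mul Polynomial.X_ne_zero hAcomp,
                Polynomial.natDegree_comp, Polynomial.natDegree_X,
                Polynomial.natDegree_X_pow]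
              ring
            have hQd : Q.natDegree = n * B.natDegree := by
              rw [hQdef, Polynomial.natDegree_comp, Polynomial.natDegree_X_pow]
              ring
            have hle : n * A.natDegree + 1 ≤ n * B.natDegree := by
              rw [hPd, hQd] at hdeg'
              exact hdeg'
            have hABd : A.natDegree < B.natDegree := by
              by_contra hcon
              push_neg at hcon
              have h1 : n * B.natDegree ≤ n * A.natDegree := Nat.mul_le_mul_left n hcon
              exact Nat.not_succ_le_self _ (hle.trans h1)
            have h2 : n * (A.natDegree + 1) ≤ n * B.natDegree := Nat.mul_le_mul_left n hABd
            have h3 : P.natDegree < Q.natDegree := by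
              rw [hPd, hQd]
              calc n * A.natDegree + 1 < n * A.natDegree + n := by omega
                _ = n * (A.natDegree + 1) := by ring
                _ ≤ n * B.natDegree := h2
            exact Polynomial.coeff_eq_zero_of_natDegree_lt h3
        rw [hcoeff, zero_div, R_coe]
        norm_num
    | coe z =>
      rw [R_coe]
      by_cases hQz : Q.eval z = 0
      · rw [ratMap_coe_eq _ _ _ hQz, R_infty, ratMap_coe_eq]
        rw [hQR]
        rw [_root_.map_eq_zero]
        apply null
        rw [hQe] at hQz
        exact hQz
      · have hBw : B.eval (z ^ n) ≠ 0 := by rw [hQe] at hQz; exact hQz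
        have hBcw : Bc.eval (z ^ n / b) ≠ 0 := nonnull _ hBw
        have hQRz : Q.eval (β * (starRingEnd ℂ) z) ≠ 0 := by
          rw [hQR, Ne, _root_.map_eq_zero]; exact hBcw
        rw [ratMap_coe_ne _ _ _ hQz, R_coe, ratMap_coe_ne _ _ _ hQRz,
          OnePoint.coe_eq_coe, hPe, hQe, hPR, hQR]
        have hdiv : A.eval (z ^ n) / B.eval (z ^ n) = Ac.eval (z ^ n / b) / Bc.eval (z ^ n / b) :=
          h (z ^ n) hBw hBcw
        have hconjdiv : (starRingEnd ℂ) (A.eval (z ^ n)) / (starRingEnd ℂ) (B.eval (z ^ n))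
            = (starRingEnd ℂ) (Ac.eval (z ^ n / b)) / (starRingEnd ℂ) (Bc.eval (z ^ n / b)) := by
          rw [← map_div₀, ← map_div₀, hdiv]
        rw [mul_div_assoc, map_mul, map_div₀, hconjdiv]
        ring
end
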